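/- Let R be an associative algebra over ℂ, and let E₁ and E₂ be simple left R-modules each of which is finite-dimensional as a ℂ-vector space (with the ℂ-action induced by restriction of scalars along ℂ → R). If for every r ∈ R the trace of the ℂ-linear endomorphism (r · -) : E₁ → E₁ equals the trace of (r · -) : E₂ → E₂, then E₁ and E₂ are isomorphic as R-modules. -/

import Mathlib

noncomputable section

/-- For `R` a `ℂ`-algebra and `E` an `R`-module whose `ℂ`-action is the restriction of
the `R`-action along `ℂ → R`, left multiplication by `r : R` is a `ℂ`-linear
endomorphism of `E`. -/
def smulLeftMap {R : Type*} (E : Type*) [Ring R] [Algebra ℂ R] [AddCommGroup E]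
    [Module R E] [Module ℂ E] [IsScalarTower ℂ R E] (r : R) : E →ₗ[ℂ] E where
  toFun x := r • x
  map_add' := smul_add r
  map_smul' c x := by
    simp only [RingHom.id_apply]
    rw [← algebraMap_smul R c x, ← algebraMap_smul R c (r • x), smul_smul, smul_smul,
      Algebra.commutes]

/-- Transfer simplicity along a surjective ring hom compatible with the actions. -/
theorem isSimpleModule_of_surj {R S M : Type*} [Ring R] [Ring S] [AddCommGroup M]
    [Module R M] [Module S M] (f : R →+* S) (hc : ∀ (r : R) (x : M), f r • x = r • x)
    [IsSimpleModule R M] : IsSimpleModule S M := by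
  haveI := IsSimpleModule.nontrivial R M
  refine { toIsSimpleOrder := ⟨fun N => ?_⟩ }
  let N' : Submodule R M :=
    { carrier := N
      add_mem' := fun ha hb => N.add_mem ha hb
      zero_mem' := N.zero_mem
      smul_mem' := fun r x hx => by
        have : r • x = f r • x := (hc r x).symm
        simpa [this] using N.smul_mem (f r) hx }
  rcases eq_bot_or_eq_top N' with h | h
  · left
    ext x
    have : x ∈ N ↔ x ∈ N' := Iff.rfl
    simp only [Submodule.mem_bot]
    rw [this, h]
    simp
  · right
    ext x
    have : x ∈ N ↔ x ∈ N' := Iff.rfl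
    simp only [Submodule.mem_top, iff_true]
    rw [this, h]
    simp

/-- Over a semisimple ring, given two simple modules with no nonzero homs `E₂ → E₁`,
there is an idempotent killing `E₁` but not `E₂`. -/
theorem exists_idem' {S E₁ E₂ : Type*} [Ring S] [IsSemisimpleRing S]
    [AddCommGroup E₁] [Module S E₁] [AddCommGroup E₂] [Module S E₂]
    [IsSimpleModule S E₁] [IsSimpleModule S E₂]
    (h : ∀ g : E₂ →ₗ[S] E₁, g = 0) :
    ∃ e : S, IsIdempotentElem e ∧ (∀ x : E₁, e • x = 0) ∧ ¬ ∀ y : E₂, e • y = 0 := by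
  haveI : Nontrivial E₂ := IsSimpleModule.nontrivial S E₂
  obtain ⟨y₀, hy₀⟩ := exists_ne (0 : E₂)
  set π : S →ₗ[S] E₂ := LinearMap.toSpanSingleton S E₂ y₀ with hπ
  have hsurj : Function.Surjective π := IsSimpleModule.toSpanSingleton_surjective S hy₀
  obtain ⟨K, hK⟩ := exists_isCompl (LinearMap.ker π)
  let iso : K ≃ₗ[S] E₂ :=
    (Submodule.quotientEquivOfIsCompl _ K hK).symm.trans (π.quotKerEquivOfSurjective hsurj)
  -- every element of K annihilates E₁
  have hK1 : ∀ (k : K) (x : E₁), (k : S) • x = 0 := by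
    intro k x
    let ψ : E₂ →ₗ[S] E₁ :=
      { toFun := fun v => ((iso.symm v : K) : S) • x
        map_add' := fun a b => by
          simp only [map_add, Submodule.coe_add, add_smul]
        map_smul' := fun s v => by
          simp only [map_smul, Submodule.coe_smul, RingHom.id_apply, smul_eq_mul, mul_smul] }
    have hz := h ψ
    have : ψ (iso k) = (k : S) • x := by
      simp only [ψ, LinearMap.coe_mk, AddHom.coe_mk, LinearEquiv.symm_apply_apply]
    rw [hz] at this
    simpa using this.symm
  obtain ⟨e, he, hspan⟩ := IsSemisimpleRing.ideal_eq_span_idempotent (K : Ideal S)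
  have heK : e ∈ K := by
    rw [hspan]
    exact Submodule.mem_span_singleton_self e
  refine ⟨e, he, fun x => hK1 ⟨e, heK⟩ x, fun hall => ?_⟩
  -- if e kills E₂ then K ≤ ker π, contradiction
  have hle : K ≤ LinearMap.ker π := by
    rw [hspan, Ideal.span_le]
    rintro _ rfl
    simp only [SetLike.mem_coe, LinearMap.mem_ker, hπ, LinearMap.toSpanSingleton_apply]
    exact hall y₀
  have hbot : K = ⊥ := (hK.symm.disjoint.eq_bot_of_le hle)
  have hmem : ((iso.symm y₀ : K) : S) ∈ K := (iso.symm y₀).2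
  have hmem0 := hbot.le hmem
  rw [Submodule.mem_bot] at hmem0
  have : iso.symm y₀ = 0 := Subtype.ext hmem0
  apply hy₀
  calc y₀ = iso (iso.symm y₀) := (iso.apply_symm_apply y₀).symm
  _ = iso 0 := by rw [this]
  _ = 0 := map_zero _

@[simp] theorem smulLeftMap_apply {R : Type*} (E : Type*) [Ring R] [Algebra ℂ R] [AddCommGroup E]
    [Module R E] [Module ℂ E] [IsScalarTower ℂ R E] (r : R) (x : E) :
    smulLeftMap E r x = r • x := rfl

section setup

variable {R E₁ E₂ : Type*} [Ring R] [Algebra ℂ R]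
    [AddCommGroup E₁] [Module R E₁] [Module ℂ E₁] [IsScalarTower ℂ R E₁]
    [AddCommGroup E₂] [Module R E₂] [Module ℂ E₂] [IsScalarTower ℂ R E₂]

/-- The algebra map `R → End(E₁) × End(E₂)`. -/
def pairRep (R E₁ E₂ : Type*) [Ring R] [Algebra ℂ R]
    [AddCommGroup E₁] [Module R E₁] [Module ℂ E₁] [IsScalarTower ℂ R E₁]
    [AddCommGroup E₂] [Module R E₂] [Module ℂ E₂] [IsScalarTower ℂ R E₂] :
    R →ₐ[ℂ] (Module.End ℂ E₁ × Module.End ℂ E₂) where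
  toFun r := (smulLeftMap E₁ r, smulLeftMap E₂ r)
  map_one' := by
    refine Prod.ext (LinearMap.ext fun x => ?_) (LinearMap.ext fun x => ?_) <;>
      simp [Module.End.one_apply]
  map_mul' r s := by
    refine Prod.ext (LinearMap.ext fun x => ?_) (LinearMap.ext fun x => ?_) <;>
      simp [Module.End.mul_apply, mul_smul]
  map_zero' := by
    refine Prod.ext (LinearMap.ext fun x => ?_) (LinearMap.ext fun x => ?_) <;> simp
  map_add' r s := by
    refine Prod.ext (LinearMap.ext fun x => ?_) (LinearMap.ext fun x => ?_) <;>
      simp [add_smul]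
  commutes' c := by
    refine Prod.ext (LinearMap.ext fun x => ?_) (LinearMap.ext fun x => ?_) <;>
      simp [Module.algebraMap_end_apply, algebraMap_smul]

end setup

set_option synthInstance.maxHeartbeats 1000000 in
set_option maxHeartbeats 2000000 in
/-- Let `R` be an associative `ℂ`-algebra and `E₁, E₂` simple left
`R`-modules, finite-dimensional over `ℂ` (the `ℂ`-action being the restriction of scalars
along `ℂ → R`).  If for every `r : R` the traces of `(r • ·)` on `E₁` and on `E₂` agree,
then `E₁ ≅ E₂` as `R`-modules. -/
theorem statement8 {R E₁ E₂ : Type*} [Ring R] [Algebra ℂ R]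
    [AddCommGroup E₁] [Module R E₁] [Module ℂ E₁] [IsScalarTower ℂ R E₁]
    [AddCommGroup E₂] [Module R E₂] [Module ℂ E₂] [IsScalarTower ℂ R E₂]
    [IsSimpleModule R E₁] [IsSimpleModule R E₂]
    [FiniteDimensional ℂ E₁] [FiniteDimensional ℂ E₂]
    (htr : ∀ r : R,
      LinearMap.trace ℂ E₁ (smulLeftMap E₁ r) = LinearMap.trace ℂ E₂ (smulLeftMap E₂ r)) :
    Nonempty (E₁ ≃ₗ[R] E₂) := by
  by_contra hcon
  set φ := pairRep R E₁ E₂ with hφ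
  set S := φ.range with hS
  letI : Module (Module.End ℂ E₁ × Module.End ℂ E₂) E₁ :=
    Module.compHom E₁ (RingHom.fst (Module.End ℂ E₁) (Module.End ℂ E₂))
  letI : Module (Module.End ℂ E₁ × Module.End ℂ E₂) E₂ :=
    Module.compHom E₂ (RingHom.snd (Module.End ℂ E₁) (Module.End ℂ E₂))
  letI : Module S E₁ := Module.compHom E₁ (S.val.toRingHom)
  letI : Module S E₂ := Module.compHom E₂ (S.val.toRingHom)
  have hs1 : ∀ (s : S) (x : E₁), s • x = ((s : Module.End ℂ E₁ × Module.End ℂ E₂).1) x :=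
    fun s x => rfl
  have hs2 : ∀ (s : S) (y : E₂), s • y = ((s : Module.End ℂ E₁ × Module.End ℂ E₂).2) y :=
    fun s y => rfl
  have hr1 : ∀ (r : R) (x : E₁), (φ.rangeRestrict r) • x = r • x := fun r x => rfl
  have hr2 : ∀ (r : R) (y : E₂), (φ.rangeRestrict r) • y = r • y := fun r y => rfl
  haveI : IsSimpleModule S E₁ :=
    isSimpleModule_of_surj (R := R) φ.rangeRestrict.toRingHom hr1
  haveI : IsSimpleModule S E₂ :=
    isSimpleModule_of_surj (R := R) φ.rangeRestrict.toRingHom hr2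
  -- semisimplicity of the product module
  haveI hM : IsSemisimpleModule S (E₁ × E₂) := by
    refine isSemisimpleModule_of_isSemisimpleModule_submodule'
      (p := fun b : Bool => Bool.rec (LinearMap.range (LinearMap.inr S E₁ E₂))
        (LinearMap.range (LinearMap.inl S E₁ E₂)) b) ?_ ?_
    · rintro (_|_)
      · exact .range _
      · exact .range _
    · rw [iSup_bool_eq]
      exact LinearMap.sup_range_inl_inr
  classical
  set n := Module.finrank ℂ (E₁ × E₂) with hn
  haveI : IsSemisimpleModule S (Fin n → E₁ × E₂) := by
    refine isSemisimpleModule_of_isSemisimpleModule_submodule'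
      (p := fun i => LinearMap.range (LinearMap.single S (fun _ => E₁ × E₂) i))
      (fun i => .range _) ?_
    simp_rw [LinearMap.range_eq_map, Submodule.iSup_map_single, Submodule.pi_top]
  set b := Module.finBasis ℂ (E₁ × E₂) with hb
  -- the action of `s : S` on `E₁ × E₂` as a `ℂ`-linear map
  let μ : S → (E₁ × E₂) →ₗ[ℂ] (E₁ × E₂) := fun s =>
    LinearMap.prodMap (s : Module.End ℂ E₁ × Module.End ℂ E₂).1
      (s : Module.End ℂ E₁ × Module.End ℂ E₂).2
  have hμ : ∀ (s : S) (m : E₁ × E₂), μ s m = s • m := fun s m => rfl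
  let f : S →ₗ[S] (Fin n → E₁ × E₂) :=
    { toFun := fun s => fun i => s • b i
      map_add' := fun s t => by funext i; exact add_smul s t (b i)
      map_smul' := fun t s => by
        funext i
        simp only [RingHom.id_apply, Pi.smul_apply, smul_eq_mul, mul_smul] }
  have hf : Function.Injective f := by
    intro s t hst
    have hzero : ∀ m : E₁ × E₂, s • m = t • m := by
      have hμeq : μ s = μ t := by
        refine b.ext fun i => ?_
        rw [hμ, hμ]
        exact congrFun hst i
      intro m
      rw [← hμ, ← hμ, hμeq]
    have : (s : Module.End ℂ E₁ × Module.End ℂ E₂)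
        = (t : Module.End ℂ E₁ × Module.End ℂ E₂) := by
      refine Prod.ext (LinearMap.ext fun x => ?_) (LinearMap.ext fun y => ?_)
      · have := hzero (x, 0)
        rw [← hs1 s x, ← hs1 t x] at *
        exact congrArg Prod.fst this
      · have := hzero (0, y)
        rw [← hs2 s y, ← hs2 t y] at *
        exact congrArg Prod.snd this
    exact Subtype.ext this
  haveI : IsSemisimpleRing S :=
    IsSemisimpleModule.of_injective f hf
  -- no nonzero S-homs E₂ → E₁
  have hhom : ∀ g : E₂ →ₗ[S] E₁, g = 0 := by
    intro g
    by_contra hg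
    have hbij := LinearMap.bijective_of_ne_zero hg
    let eqv : E₂ ≃ₗ[S] E₁ := LinearEquiv.ofBijective g hbij
    refine hcon ⟨{ toFun := eqv.symm
                   invFun := eqv
                   left_inv := eqv.apply_symm_apply
                   right_inv := eqv.symm_apply_apply
                   map_add' := map_add _
                   map_smul' := fun r x => ?_ }⟩
    show eqv.symm (r • x) = r • eqv.symm x
    rw [← hr1 r x, map_smul]
    exact hr2 r (eqv.symm x)
  obtain ⟨e, he, h1, h2⟩ := exists_idem' (S := S) (E₁ := E₁) (E₂ := E₂) hhom
  obtain ⟨r, hr⟩ := φ.mem_range.mp e.2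
  have hy1 : ∀ x : E₁, smulLeftMap E₁ r x = e • x := by
    intro x
    rw [hs1 e x, ← hr]
    rfl
  have hy2 : ∀ y : E₂, smulLeftMap E₂ r y = e • y := by
    intro y
    rw [hs2 e y, ← hr]
    rfl
  have hleft : smulLeftMap E₁ r = 0 := by
    ext x
    rw [hy1 x]
    exact h1 x
  have hidem : smulLeftMap E₂ r ∘ₗ smulLeftMap E₂ r = smulLeftMap E₂ r := by
    ext y
    simp only [LinearMap.comp_apply, hy2]
    rw [← mul_smul, he]
  obtain ⟨V, hV⟩ := (LinearMap.isProj_iff_isIdempotentElem (smulLeftMap E₂ r)).mpr hidem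
  have htr2 : LinearMap.trace ℂ E₂ (smulLeftMap E₂ r) = (Module.finrank ℂ V : ℂ) := hV.trace
  have hVne : V ≠ ⊥ := by
    rintro rfl
    apply h2
    intro y
    have hm := hV.map_mem y
    rw [Submodule.mem_bot] at hm
    exact (hy2 y).symm.trans hm
  have hfr : Module.finrank ℂ V ≠ 0 := fun hzero => hVne (Submodule.finrank_eq_zero.mp hzero)
  have hfin := htr r
  rw [hleft, map_zero, htr2] at hfin
  exact hfr (by exact_mod_cast hfin.symm)
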